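/- Let m ≥ 2, X > 0, χ > 0, C_Φ > 0. Let a_0,…,a_{m−1} : [0,X] → ℝ be continuously differentiable, let L_1,…,L_m : [0,∞)×[0,X] → ℝ satisfy |L_i(ξ,x)| ≤ C_Φ(1+ξ^{m−1})e^{−χξ} for all i, ξ ≥ 0, x ∈ [0,X], and let Â(ε) be the operator of the previous statement (with any admissible ȳ, K_i, Π_j, f). Set β := (Σ_{j=0}^{m−1} sup_{[0,X]}|a_j'|)(χ^{m−1}+m!)/χ^{m+1}. Then for every ε > 0 and all continuous z₁, z₂ : [0,X/ε] → ℝ^m, max_{1≤i≤m} sup_{ξ∈[0,X/ε]} |Â_i(ε)[z₂](ξ) − Â_i(ε)[z₁](ξ)| ≤ ε C_Φ β · max_{1≤i≤m} sup_{ξ∈[0,X/ε]} |z₂^i(ξ) − z₁^i(ξ)|. In particular, Â(ε) is a contraction on C_m[0,X/ε] whenever ε C_Φ β < 1. -/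

import Mathlib

open MeasureTheory Set Filter Real Topology

lemma bddAbove_range_abs_of_compact {f : ℝ → ℝ} {s : Set ℝ} (hs : IsCompact s)
    (hf : ContinuousOn f s) : BddAbove (Set.range fun x : s => f x) := by
  have h : Set.range (fun x : s => f x) = f '' s := by
    ext y
    constructor
    · rintro ⟨⟨x, hx⟩, rfl⟩; exact ⟨x, hx, rfl⟩
    · rintro ⟨x, hx, rfl⟩; exact ⟨⟨x, hx⟩, rfl⟩
  rw [h]
  exact (hs.image_of_continuousOn hf).bddAbove

lemma tendsto_pow_mul_exp_neg_mul (n : ℕ) {c : ℝ} (hc : 0 < c) :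
    Tendsto (fun x : ℝ => x ^ n * Real.exp (-(c * x))) atTop (𝓝 0) := by
  have h := (tendsto_pow_mul_exp_neg_atTop_nhds_zero n).comp
    (tendsto_id.const_mul_atTop hc)
  have h2 := h.const_mul ((1:ℝ)/c^n)
  rw [mul_zero] at h2
  refine h2.congr fun x => ?_
  simp only [Function.comp, mul_pow, id]
  field_simp

lemma integrableOn_pow_mul_exp_neg_mul (n : ℕ) {χ : ℝ} (hχ : 0 < χ) :
    IntegrableOn (fun t : ℝ => t ^ n * Real.exp (-(χ * t))) (Set.Ioi 0) := by
  apply integrable_of_isBigO_exp_neg (half_pos hχ)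
  · exact ((continuous_pow n).mul (Real.continuous_exp.comp (by fun_prop))).continuousOn
  · have h1 : (fun x : ℝ => x ^ n * Real.exp (-(χ/2 * x))) =O[atTop] (fun _ : ℝ => (1:ℝ)) :=
      (tendsto_pow_mul_exp_neg_mul n (half_pos hχ)).isBigO_one ℝ
    have h2 := h1.mul (Asymptotics.isBigO_refl (fun x : ℝ => Real.exp (-(χ/2 * x))) atTop)
    refine (h2.congr (fun x => ?_) (fun x => ?_))
    · rw [mul_assoc, ← Real.exp_add]; ring_nf
    · rw [one_mul]; ring_nf

lemma integral_pow_mul_exp_neg_mul (n : ℕ) {χ : ℝ} (hχ : 0 < χ) :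
    ∫ t in Set.Ioi (0:ℝ), t ^ n * Real.exp (-(χ * t)) = (n.factorial : ℝ) / χ ^ (n + 1) := by
  have h := integral_rpow_mul_exp_neg_mul_Ioi (a := (n:ℝ) + 1) (r := χ) (by positivity) hχ
  rw [show ((n:ℝ) + 1 - 1) = (n:ℝ) by ring] at h
  have e : ∀ t ∈ Set.Ioi (0:ℝ),
      t ^ n * Real.exp (-(χ * t)) = t ^ ((n:ℝ)) * Real.exp (-(χ * t)) := by
    intro t ht; rw [Real.rpow_natCast]
  rw [setIntegral_congr_fun measurableSet_Ioi e, h, Real.Gamma_nat_eq_factorial,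
    show ((n:ℝ) + 1) = ((n + 1 : ℕ) : ℝ) by push_cast; ring, Real.rpow_natCast,
    div_pow, one_pow]
  ring


/-- The integral operator `Â(ε)` of the boundary-layer system:
`Â_i(ε)[z](ξ) = −∫₀^ξ K_i(ξ−ζ, εξ) ȳ'(εζ) dζ
  + ∫₀^ξ L_i(ξ−ζ, εξ) {Σ_j [a_j(εζ) − a_j(εξ)] z^{j+1}(ζ) + f(ζ)} dζ`.
Here `yd` plays the role of `ȳ'` and the component `z j` of `z : Fin m → ℝ → ℝ`
corresponds to `z^{j+1}`. -/
noncomputable def Ahat (m : ℕ) (ε : ℝ) (a : Fin m → ℝ → ℝ) (yd : ℝ → ℝ)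
    (K L : Fin m → ℝ → ℝ → ℝ) (f : ℝ → ℝ) (z : Fin m → ℝ → ℝ) (i : Fin m) (ξ : ℝ) : ℝ :=
  -(∫ ζ in (0:ℝ)..ξ, K i (ξ - ζ) (ε * ξ) * yd (ε * ζ)) +
    ∫ ζ in (0:ℝ)..ξ, L i (ξ - ζ) (ε * ξ) *
      ((∑ j : Fin m, (a j (ε * ζ) - a j (ε * ξ)) * z j ζ) + f ζ)

/-- contraction estimate.
With `β := (Σ_j sup_{[0,X]} |a_j'|)(χ^{m−1}+m!)/χ^{m+1}`, for every `ε > 0` and all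
continuous `z₁, z₂ : [0, X/ε] → ℝ^m`,
`‖Â(ε)[z₂] − Â(ε)[z₁]‖ ≤ ε C_Φ β ‖z₂ − z₁‖` in the max–sup norm of `C_m[0, X/ε]`;
in particular `Â(ε)` is a contraction whenever `ε C_Φ β < 1`.  The data `ȳ'` (here `yd`),
`K_i` and `f` are arbitrary. -/
theorem Ahat_contraction (m : ℕ) (hm : 2 ≤ m) (X χ CΦ : ℝ)
    (hX : 0 < X) (hχ : 0 < χ) (hCΦ : 0 < CΦ)
    (a : Fin m → ℝ → ℝ) (ha : ∀ j, ContDiffOn ℝ 1 (a j) (Set.Icc 0 X))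
    (L : Fin m → ℝ → ℝ → ℝ)
    (hLcont : ∀ i, Continuous fun p : ℝ × ℝ => L i p.1 p.2)
    (hL : ∀ i, ∀ ξ : ℝ, 0 ≤ ξ → ∀ x ∈ Set.Icc (0:ℝ) X,
      |L i ξ x| ≤ CΦ * (1 + ξ ^ (m - 1)) * Real.exp (-χ * ξ))
    (β : ℝ)
    (hβ : β = (∑ j : Fin m, ⨆ x : Set.Icc (0:ℝ) X, |derivWithin (a j) (Set.Icc 0 X) x|)
      * (χ ^ (m - 1) + (Nat.factorial m : ℝ)) / χ ^ (m + 1)) :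
    ∀ yd : ℝ → ℝ, ∀ K : Fin m → ℝ → ℝ → ℝ, ∀ f : ℝ → ℝ, ∀ ε > (0:ℝ),
      ∀ z₁ z₂ : Fin m → ℝ → ℝ,
        (∀ i, ContinuousOn (z₁ i) (Set.Icc 0 (X / ε))) →
        (∀ i, ContinuousOn (z₂ i) (Set.Icc 0 (X / ε))) →
        (⨆ i : Fin m, ⨆ ξ : Set.Icc (0:ℝ) (X / ε),
            |Ahat m ε a yd K L f z₂ i ξ - Ahat m ε a yd K L f z₁ i ξ|)
          ≤ ε * CΦ * β *
            ⨆ i : Fin m, ⨆ ξ : Set.Icc (0:ℝ) (X / ε), |z₂ i ξ - z₁ i ξ| := by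
  intro yd K f ε hε z₁ z₂ hz₁ hz₂
  haveI : Nonempty (Fin m) := ⟨⟨0, by omega⟩⟩
  have hXε : 0 < X / ε := div_pos hX hε
  haveI hne : Nonempty (Set.Icc (0:ℝ) (X/ε)) := ⟨⟨0, ⟨le_refl _, hXε.le⟩⟩⟩
  set M := ⨆ i : Fin m, ⨆ ξ : Set.Icc (0:ℝ) (X / ε), |z₂ i ξ - z₁ i ξ| with hM
  have hMb : ∀ i : Fin m, ∀ ζ ∈ Set.Icc (0:ℝ) (X/ε), |z₂ i ζ - z₁ i ζ| ≤ M := by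
    intro i ζ hζ
    have hb : BddAbove (Set.range fun ξ : Set.Icc (0:ℝ) (X/ε) => |z₂ i ξ - z₁ i ξ|) :=
      bddAbove_range_abs_of_compact isCompact_Icc (((hz₂ i).sub (hz₁ i)).abs)
    have h1 : |z₂ i ζ - z₁ i ζ| ≤ ⨆ ξ : Set.Icc (0:ℝ) (X/ε), |z₂ i ξ - z₁ i ξ| :=
      le_ciSup hb ⟨ζ, hζ⟩
    refine h1.trans ?_
    rw [hM]
    exact le_ciSup (f := fun i : Fin m =>
      ⨆ ξ : Set.Icc (0:ℝ) (X/ε), |z₂ i ↑ξ - z₁ i ↑ξ|)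
      (Set.Finite.bddAbove (Set.finite_range _)) i
  have hM0 : 0 ≤ M :=
    le_trans (abs_nonneg _) (hMb ⟨0, by omega⟩ 0 ⟨le_refl _, hXε.le⟩)
  -- the Lipschitz constants of the a j
  have hUD : UniqueDiffOn ℝ (Set.Icc (0:ℝ) X) := uniqueDiffOn_Icc hX
  set A : Fin m → ℝ :=
    fun j => ⨆ x : Set.Icc (0:ℝ) X, |derivWithin (a j) (Set.Icc 0 X) x| with hA
  have hAb : ∀ j, ∀ x ∈ Set.Icc (0:ℝ) X, |derivWithin (a j) (Set.Icc 0 X) x| ≤ A j := by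
    intro j x hx
    exact le_ciSup (bddAbove_range_abs_of_compact isCompact_Icc
      (((ha j).continuousOn_derivWithin hUD le_rfl).abs)) ⟨x, hx⟩
  have hA0 : ∀ j, 0 ≤ A j := fun j =>
    le_trans (abs_nonneg _) (hAb j 0 ⟨le_refl _, hX.le⟩)
  have hSA0 : 0 ≤ ∑ j, A j := Finset.sum_nonneg fun j _ => hA0 j
  have hβ0 : 0 ≤ β := by
    rw [hβ]
    have hf : (0:ℝ) ≤ (Nat.factorial m : ℝ) := by positivity
    positivity
  have hMVT : ∀ j, ∀ u ∈ Set.Icc (0:ℝ) X, ∀ v ∈ Set.Icc (0:ℝ) X,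
      |a j u - a j v| ≤ A j * |u - v| := by
    intro j u hu v hv
    have := Convex.norm_image_sub_le_of_norm_derivWithin_le
      ((ha j).differentiableOn one_ne_zero) (fun x hx => hAb j x hx) (convex_Icc 0 X) hv hu
    simpa [Real.norm_eq_abs] using this
  refine ciSup_le fun i => ciSup_le fun ξs => ?_
  obtain ⟨ξ, hξ0, hξX⟩ := ξs
  have hεξ : ε * ξ ≤ X := by rw [mul_comm]; exact (le_div_iff₀ hε).mp hξX
  have hεξ0 : (0:ℝ) ≤ ε * ξ := mul_nonneg hε.le hξ0
  have hmem : ∀ ζ ∈ Set.Icc (0:ℝ) ξ, ε * ζ ∈ Set.Icc (0:ℝ) X := by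
    intro ζ hζ
    exact ⟨mul_nonneg hε.le hζ.1, le_trans (by nlinarith [hζ.2]) hεξ⟩
  have hIccsub : Set.Icc (0:ℝ) ξ ⊆ Set.Icc 0 (X/ε) := Set.Icc_subset_Icc le_rfl hξX
  -- the three integrands
  set g₁ : ℝ → ℝ := fun ζ => L i (ξ - ζ) (ε * ξ) *
    ((∑ j : Fin m, (a j (ε * ζ) - a j (ε * ξ)) * z₁ j ζ) + f ζ) with hg₁
  set g₂ : ℝ → ℝ := fun ζ => L i (ξ - ζ) (ε * ξ) *
    ((∑ j : Fin m, (a j (ε * ζ) - a j (ε * ξ)) * z₂ j ζ) + f ζ) with hg₂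
  set d : ℝ → ℝ := fun ζ => L i (ξ - ζ) (ε * ξ) *
    (∑ j : Fin m, (a j (ε * ζ) - a j (ε * ξ)) * (z₂ j ζ - z₁ j ζ)) with hd
  have hdiff : Ahat m ε a yd K L f z₂ i ξ - Ahat m ε a yd K L f z₁ i ξ
      = (∫ ζ in (0:ℝ)..ξ, g₂ ζ) - ∫ ζ in (0:ℝ)..ξ, g₁ ζ := by
    simp only [Ahat, hg₁, hg₂]
    ring
  have hg21 : ∀ ζ, g₂ ζ - g₁ ζ = d ζ := by
    intro ζ
    have hs : (∑ j : Fin m, (a j (ε*ζ) - a j (ε*ξ)) * z₂ j ζ)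
        - (∑ j : Fin m, (a j (ε*ζ) - a j (ε*ξ)) * z₁ j ζ)
        = ∑ j : Fin m, (a j (ε*ζ) - a j (ε*ξ)) * (z₂ j ζ - z₁ j ζ) := by
      rw [← Finset.sum_sub_distrib]
      exact Finset.sum_congr rfl fun j _ => by ring
    simp only [hg₁, hg₂, hd]
    rw [← hs]
    ring
  -- continuity and integrability of d
  have hLc : Continuous fun ζ : ℝ => L i (ξ - ζ) (ε * ξ) :=
    (hLcont i).comp (Continuous.prodMk (by fun_prop) continuous_const)
  have hac : ∀ j, ContinuousOn (fun ζ : ℝ => a j (ε * ζ)) (Set.Icc 0 ξ) := by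
    intro j
    exact ((ha j).continuousOn).comp (by fun_prop) hmem
  have hdc : ContinuousOn d (Set.Icc 0 ξ) := by
    refine hLc.continuousOn.mul ?_
    refine continuousOn_finset_sum _ fun j _ => ?_
    exact ((hac j).sub continuousOn_const).mul
      (((hz₂ j).mono hIccsub).sub ((hz₁ j).mono hIccsub))
  have hdint : IntervalIntegrable d volume 0 ξ := by
    apply ContinuousOn.intervalIntegrable
    rwa [Set.uIcc_of_le hξ0]
  by_cases hg₁i : IntervalIntegrable g₁ volume 0 ξ
  · -- main case
    have hg₂i : IntervalIntegrable g₂ volume 0 ξ := by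
      have he : g₂ = fun ζ => g₁ ζ + d ζ := by
        funext ζ; rw [← hg21 ζ]; ring
      rw [he]; exact hg₁i.add hdint
    have key : Ahat m ε a yd K L f z₂ i ξ - Ahat m ε a yd K L f z₁ i ξ
        = ∫ ζ in (0:ℝ)..ξ, d ζ := by
      rw [hdiff, ← intervalIntegral.integral_sub hg₂i hg₁i]
      exact intervalIntegral.integral_congr fun ζ _ => hg21 ζ
    rw [key]
    set C : ℝ := ε * CΦ * (∑ j, A j) * M with hC
    have hC0 : 0 ≤ C := mul_nonneg (mul_nonneg (mul_nonneg hε.le hCΦ.le) hSA0) hM0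
    set Φ : ℝ → ℝ := fun t => C * ((1 + t ^ (m-1)) * t * Real.exp (-(χ * t))) with hΦ
    have hΦc : Continuous Φ := by fun_prop
    -- pointwise bound
    have hpt : ∀ ζ ∈ Set.Icc (0:ℝ) ξ, |d ζ| ≤ Φ (ξ - ζ) := by
      intro ζ hζ
      have ht0 : (0:ℝ) ≤ ξ - ζ := by linarith [hζ.2]
      have hLb : |L i (ξ - ζ) (ε * ξ)| ≤
          CΦ * (1 + (ξ - ζ) ^ (m-1)) * Real.exp (-χ * (ξ - ζ)) :=
        hL i (ξ - ζ) ht0 (ε * ξ) ⟨hεξ0, hεξ⟩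
      have hSb : |∑ j : Fin m, (a j (ε * ζ) - a j (ε * ξ)) * (z₂ j ζ - z₁ j ζ)|
          ≤ (∑ j, A j) * (ε * (ξ - ζ)) * M := by
        calc |∑ j : Fin m, (a j (ε * ζ) - a j (ε * ξ)) * (z₂ j ζ - z₁ j ζ)|
            ≤ ∑ j : Fin m, |(a j (ε * ζ) - a j (ε * ξ)) * (z₂ j ζ - z₁ j ζ)| :=
              Finset.abs_sum_le_sum_abs _ _
          _ ≤ ∑ j : Fin m, A j * (ε * (ξ - ζ)) * M := by
              refine Finset.sum_le_sum fun j _ => ?_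
              rw [abs_mul]
              have h1 : |a j (ε * ζ) - a j (ε * ξ)| ≤ A j * (ε * (ξ - ζ)) := by
                have := hMVT j (ε * ζ) (hmem ζ hζ) (ε * ξ) ⟨hεξ0, hεξ⟩
                have habs : |ε * ζ - ε * ξ| = ε * (ξ - ζ) := by
                  rw [abs_sub_comm, abs_of_nonneg (by nlinarith [hζ.2])]
                  ring
                rwa [habs] at this
              have h2 : |z₂ j ζ - z₁ j ζ| ≤ M := hMb j ζ (hIccsub hζ)
              exact mul_le_mul h1 h2 (abs_nonneg _)
                (mul_nonneg (hA0 j) (mul_nonneg hε.le (by linarith [hζ.2])))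
          _ = (∑ j, A j) * (ε * (ξ - ζ)) * M := by
              rw [← Finset.sum_mul, ← Finset.sum_mul]
      calc |d ζ| = |L i (ξ - ζ) (ε * ξ)| *
            |∑ j : Fin m, (a j (ε * ζ) - a j (ε * ξ)) * (z₂ j ζ - z₁ j ζ)| := by
            rw [hd]; exact abs_mul _ _
        _ ≤ (CΦ * (1 + (ξ - ζ) ^ (m-1)) * Real.exp (-χ * (ξ - ζ))) *
            ((∑ j, A j) * (ε * (ξ - ζ)) * M) := by
            refine mul_le_mul hLb hSb (abs_nonneg _) ?_
            positivity
        _ = Φ (ξ - ζ) := by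
            rw [hΦ, hC]
            simp only [neg_mul]
            ring
    have hΦcompint : IntervalIntegrable (fun ζ => Φ (ξ - ζ)) volume 0 ξ :=
      (hΦc.comp (by fun_prop)).intervalIntegrable 0 ξ
    have step1 : |∫ ζ in (0:ℝ)..ξ, d ζ| ≤ ∫ ζ in (0:ℝ)..ξ, |d ζ| := by
      simpa [Real.norm_eq_abs] using
        intervalIntegral.norm_integral_le_integral_norm (f := d) (μ := volume) hξ0
    have step2 : (∫ ζ in (0:ℝ)..ξ, |d ζ|) ≤ ∫ ζ in (0:ℝ)..ξ, Φ (ξ - ζ) :=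
      intervalIntegral.integral_mono_on hξ0 hdint.abs hΦcompint hpt
    have step3 : (∫ ζ in (0:ℝ)..ξ, Φ (ξ - ζ)) = ∫ t in (0:ℝ)..ξ, Φ t := by
      simpa using intervalIntegral.integral_comp_sub_left Φ ξ (a := 0) (b := ξ)
    -- key pow identity
    have hΦeq : Φ = fun t => C * (t^1 * Real.exp (-(χ * t)) + t^m * Real.exp (-(χ * t))) := by
      funext t
      have h1 : t ^ (m-1) * t = t ^ m := by
        rw [← pow_succ]; congr 1; omega
      rw [hΦ]
      linear_combination C * Real.exp (-(χ*t)) * h1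
    have hint1 := integrableOn_pow_mul_exp_neg_mul 1 hχ
    have hintm := integrableOn_pow_mul_exp_neg_mul m hχ
    have hintsum : IntegrableOn
        (fun t : ℝ => t^1 * Real.exp (-(χ * t)) + t^m * Real.exp (-(χ * t)))
        (Set.Ioi 0) := hint1.add hintm
    have step4 : (∫ t in (0:ℝ)..ξ, Φ t) ≤ C * ((1:ℝ)/χ^2 + (Nat.factorial m : ℝ)/χ^(m+1)) := by
      rw [hΦeq, intervalIntegral.integral_const_mul]
      refine mul_le_mul_of_nonneg_left ?_ hC0
      have hle : (∫ t in (0:ℝ)..ξ, (t^1 * Real.exp (-(χ * t)) + t^m * Real.exp (-(χ * t))))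
          ≤ ∫ t in Set.Ioi (0:ℝ), (t^1 * Real.exp (-(χ * t)) + t^m * Real.exp (-(χ * t))) := by
        rw [intervalIntegral.integral_of_le hξ0]
        refine setIntegral_mono_set hintsum ?_ ?_
        · filter_upwards [self_mem_ae_restrict measurableSet_Ioi] with t ht
          have ht0 : (0:ℝ) ≤ t := le_of_lt ht
          positivity
        · exact HasSubset.Subset.eventuallyLE Set.Ioc_subset_Ioi_self
      refine hle.trans ?_
      rw [integral_add hint1 hintm, integral_pow_mul_exp_neg_mul 1 hχ,
        integral_pow_mul_exp_neg_mul m hχ]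
      norm_num
    have harith : C * ((1:ℝ)/χ^2 + (Nat.factorial m : ℝ)/χ^(m+1)) = ε * CΦ * β * M := by
      have hpow : χ ^ (m+1) = χ^(m-1) * χ^2 := by
        rw [← pow_add]; congr 1; omega
      rw [hC, hβ, ← hA, hpow]
      have hχ1 : χ^(m-1) ≠ 0 := pow_ne_zero _ hχ.ne'
      field_simp
    calc |∫ ζ in (0:ℝ)..ξ, d ζ| ≤ ∫ ζ in (0:ℝ)..ξ, |d ζ| := step1
      _ ≤ ∫ ζ in (0:ℝ)..ξ, Φ (ξ - ζ) := step2
      _ = ∫ t in (0:ℝ)..ξ, Φ t := step3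
      _ ≤ C * ((1:ℝ)/χ^2 + (Nat.factorial m : ℝ)/χ^(m+1)) := step4
      _ = ε * CΦ * β * M := harith
  · -- degenerate case: the integrals are undefined, hence both are 0
    have hg₂i : ¬ IntervalIntegrable g₂ volume 0 ξ := by
      intro hg₂i
      apply hg₁i
      have he : g₁ = fun ζ => g₂ ζ - d ζ := by
        funext ζ; rw [← hg21 ζ]; ring
      rw [he]; exact hg₂i.sub hdint
    rw [hdiff, intervalIntegral.integral_undef hg₁i, intervalIntegral.integral_undef hg₂i]
    simp only [sub_zero, abs_zero]
    exact mul_nonneg (mul_nonneg (mul_nonneg hε.le hCΦ.le) hβ0) hM0
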